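/- For every p ∈ X_p and θ ∈ ℝ, the full gradient of 𝒱_nav vanishes at (p,θ) — that is, the p-gradient ∇_p𝒱_nav(p,θ) = ∇V_nav(p) + (I₂ − R(θ))ᵀ(p_d − p_o) and the θ-derivative ∂_θ𝒱_nav(p,θ) = γ_θ·θ − (p − p_o)ᵀΔR(θ)ᵀ(p_o − p_d) are both zero — if and only if θ = 0 and ∇V_nav(p) = 0, where ∇V_nav(p) = p − p_d + ϱ·φ'(d_o(p))·(p − p_o)/‖p − p_o‖. Hence the critical set of 𝒱_nav equals C_{V_nav} × {0}, where C_{V_nav} is the set of critical points of V_nav. -/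

import Mathlib

open Real Filter
open scoped RealInnerProductSpace Topology Matrix

noncomputable section

/-- The Euclidean plane. -/
abbrev E2 : Type := EuclideanSpace ℝ (Fin 2)

/-- The planar rotation matrix `R(θ)`. -/
def RotM (θ : ℝ) : Matrix (Fin 2) (Fin 2) ℝ :=
  !![Real.cos θ, -Real.sin θ; Real.sin θ, Real.cos θ]

/-- The matrix `Δ = [[0,-1],[1,0]]`. -/
def DeltaM : Matrix (Fin 2) (Fin 2) ℝ := !![0, -1; 1, 0]

/-- Reinterpret a plain vector as a point of the Euclidean plane. -/
def toE2 (v : Fin 2 → ℝ) : E2 := (WithLp.equiv 2 (Fin 2 → ℝ)).symm v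

/-- Reinterpret a point of the Euclidean plane as a plain vector. -/
def fromE2 (p : E2) : Fin 2 → ℝ := WithLp.equiv 2 (Fin 2 → ℝ) p

/-- A `2×2` matrix acting on a point of the Euclidean plane. -/
def mulV (M : Matrix (Fin 2) (Fin 2) ℝ) (p : E2) : E2 := toE2 (M.mulVec (fromE2 p))

/-- The barrier function `φ`. -/
def phi (rs z : ℝ) : ℝ := if z ≤ rs then (z - rs) ^ 2 * Real.log (rs / z) else 0

/-- The derivative `φ'` of the barrier function. -/
def phi' (rs z : ℝ) : ℝ :=
  if z ≤ rs then 2 * (z - rs) * Real.log (rs / z) - (z - rs) ^ 2 / z else 0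

/-- Distance to the obstacle, `d_o(p) = ‖p - p_o‖ - r_o`. -/
def dO (po : E2) (ro : ℝ) (p : E2) : ℝ := ‖p - po‖ - ro

/-- The free space `X_p = {p : ‖p - p_o‖ ≥ r_o + ε}`. -/
def Xp (po : E2) (ro ε : ℝ) : Set E2 := {p | ro + ε ≤ ‖p - po‖}

/-- The navigation function `V_nav`. -/
def Vnav (po pd : E2) (ro ϱ rs : ℝ) (p : E2) : ℝ :=
  (1 / 2) * ‖p - pd‖ ^ 2 + ϱ * phi rs (dO po ro p)

/-- The gradient `∇V_nav(p) = p - p_d + ϱ φ'(d_o(p)) (p - p_o)/‖p - p_o‖`. -/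
def gradVnav (po pd : E2) (ro ϱ rs : ℝ) (p : E2) : E2 :=
  (p - pd) + ((ϱ * phi' rs (dO po ro p)) / ‖p - po‖) • (p - po)

/-- The transformation `T(p,θ) = p_o + R(θ)(p - p_o)`. -/
def Tmap (po : E2) (p : E2) (θ : ℝ) : E2 := po + mulV (RotM θ) (p - po)

/-- The modified navigation function `𝒱_nav`. -/
def Vnav2 (po pd : E2) (ro ϱ rs γθ : ℝ) (p : E2) (θ : ℝ) : ℝ :=
  (1 / 2) * ‖Tmap po p θ - pd‖ ^ 2 + ϱ * phi rs (dO po ro p) + (γθ / 2) * θ ^ 2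

/-- The map `σ(θ) = (I₂ - R(θ))ᵀ (p_o - p_d)`. -/
def sigmaFn (po pd : E2) (θ : ℝ) : E2 := mulV ((1 - RotM θ)ᵀ) (po - pd)

theorem e2_eq_iff' (x y : E2) : x = y ↔ x 0 = y 0 ∧ x 1 = y 1 := by
  constructor
  · rintro rfl; exact ⟨rfl, rfl⟩
  · rintro ⟨h0, h1⟩
    apply PiLp.ext
    intro i
    fin_cases i <;> assumption

theorem key_iff (p po pd : E2) (c γθ θ : ℝ) (hγθ : 0 < γθ) :
    ((p - pd) + c • (p - po) + mulV ((1 - RotM θ)ᵀ) (pd - po) = 0 ∧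
      γθ * θ - ⟪p - po, mulV DeltaM (mulV ((RotM θ)ᵀ) (po - pd))⟫ = 0)
    ↔ (θ = 0 ∧ (p - pd) + c • (p - po) = 0) := by
  simp only [mulV, toE2, fromE2, RotM, DeltaM, e2_eq_iff', PiLp.inner_apply,
    Fin.sum_univ_two, Matrix.mulVec, dotProduct, Matrix.transpose_apply,
    Matrix.sub_apply, Matrix.one_apply, PiLp.add_apply, PiLp.sub_apply, PiLp.smul_apply,
    PiLp.zero_apply, smul_eq_mul, WithLp.equiv_symm_apply, WithLp.equiv_apply,
    PiLp.toLp_apply, WithLp.ofLp_sub, Pi.sub_apply,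
    Matrix.cons_val', Matrix.cons_val_zero, Matrix.cons_val_one,
    Matrix.head_cons, Matrix.head_fin_const, Matrix.empty_val', Matrix.cons_val_fin_one,
    RCLike.inner_apply, conj_trivial, Matrix.of_apply, Fin.isValue, if_true,
    one_ne_zero, if_false, zero_ne_one, Fin.one_eq_zero_iff, Fin.zero_eq_one_iff,
    Nat.reduceEqDiff, ite_false]
  constructor
  · rintro ⟨⟨h0, h1⟩, h2⟩
    have hθ : θ = 0 := by
      have h : γθ * θ = 0 := by
        linear_combination h2 - (p 0 - po 0) * h1 + (p 1 - po 1) * h0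
      rcases mul_eq_zero.mp h with h' | h'
      · exact absurd h' hγθ.ne'
      · exact h'
    subst hθ
    simp only [Real.sin_zero, Real.cos_zero] at h0 h1
    refine ⟨rfl, by linarith, by linarith⟩
  · rintro ⟨rfl, hg0, hg1⟩
    simp only [Real.sin_zero, Real.cos_zero]
    refine ⟨⟨by linarith, by linarith⟩, ?_⟩
    linear_combination (p 0 - po 0) * hg1 - (p 1 - po 1) * hg0

/-- For every `p ∈ X_p` and `θ ∈ ℝ`, the full gradient of `𝒱_nav` vanishes at
`(p,θ)` — both the `p`-gradient `∇V_nav(p) + (I₂ - R(θ))ᵀ(p_d - p_o)` and the `θ`-derivative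
`γ_θ θ - ⟨p - p_o, Δ(R(θ)ᵀ(p_o - p_d))⟩` are zero — iff `θ = 0` and `∇V_nav(p) = 0`.
Hence the critical set of `𝒱_nav` equals `C_{V_nav} × {0}`. -/
theorem statement_2
    (po pd : E2) (ro ε ϱ rs γθ : ℝ)
    (hro : 0 < ro) (hε : 0 < ε) (hϱ : 0 < ϱ) (hγθ : 0 < γθ)
    (hpd : pd ∈ Xp po ro ε) (hrs_lb : ε < rs) (hrs_ub : rs < dO po ro pd) :
    (∀ p ∈ Xp po ro ε, ∀ θ : ℝ,
      (gradVnav po pd ro ϱ rs p + mulV ((1 - RotM θ)ᵀ) (pd - po) = 0 ∧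
        γθ * θ - ⟪p - po, mulV DeltaM (mulV ((RotM θ)ᵀ) (po - pd))⟫ = 0)
      ↔ (θ = 0 ∧ gradVnav po pd ro ϱ rs p = 0)) ∧
    {q : E2 × ℝ | q.1 ∈ Xp po ro ε ∧
        gradVnav po pd ro ϱ rs q.1 + mulV ((1 - RotM q.2)ᵀ) (pd - po) = 0 ∧
        γθ * q.2 - ⟪q.1 - po, mulV DeltaM (mulV ((RotM q.2)ᵀ) (po - pd))⟫ = 0}
      = {p : E2 | p ∈ Xp po ro ε ∧ gradVnav po pd ro ϱ rs p = 0} ×ˢ {(0 : ℝ)} := by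
  have key : ∀ p : E2, ∀ θ : ℝ,
      (gradVnav po pd ro ϱ rs p + mulV ((1 - RotM θ)ᵀ) (pd - po) = 0 ∧
        γθ * θ - ⟪p - po, mulV DeltaM (mulV ((RotM θ)ᵀ) (po - pd))⟫ = 0)
      ↔ (θ = 0 ∧ gradVnav po pd ro ϱ rs p = 0) := by
    intro p θ
    unfold gradVnav
    exact key_iff p po pd _ γθ θ hγθ
  refine ⟨fun p _ θ => key p θ, ?_⟩
  ext ⟨p, θ⟩
  simp only [Set.mem_setOf_eq, Set.mem_prod, Set.mem_singleton_iff]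
  constructor
  · rintro ⟨hx, h⟩
    have h' := (key p θ).mp h
    exact ⟨⟨hx, h'.2⟩, h'.1⟩
  · rintro ⟨⟨hx, hg⟩, hθ⟩
    exact ⟨hx, (key p θ).mpr ⟨hθ, hg⟩⟩
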